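/- Let p be a prime, let V be a finite-dimensional vector space over ℚ_p, and let T be a ℤ_p-submodule of V (for the ℤ_p-module structure obtained by restriction of scalars) which is finitely generated over ℤ_p and spans V over ℚ_p. Let G be a group and ρ : G → (V ≃ₗ[ℚ_p] V) a group homomorphism such that ρ(g)(T) ⊆ T for every g ∈ G. If the only vector v ∈ V satisfying ρ(g) v = v for all g ∈ G is v = 0, then the image in the quotient V/T of the set {v ∈ V : ρ(g) v − v ∈ T for all g ∈ G} is a finite set. -/

import Mathlib

open Filter Topology Metric Submodule

section helpers

variable {p : ℕ} [Fact p.Prime]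

variable {V : Type*} [AddCommGroup V] [Module ℚ_[p] V] [Module ℤ_[p] V]
  [IsScalarTower ℤ_[p] ℚ_[p] V]

private lemma zint_smul (c : ℤ_[p]) (w : V) : c • w = (c : ℚ_[p]) • w := by
  rw [← algebraMap_smul ℚ_[p] c w, PadicInt.algebraMap_apply]

private lemma pow_p_smul_mem (T : Submodule ℤ_[p] V) {t : V} (ht : t ∈ T) (a : ℕ) :
    (p : ℚ_[p]) ^ a • t ∈ T := by
  have h : ((p:ℚ_[p]))^a = (((p : ℤ_[p]) ^ a : ℤ_[p]) : ℚ_[p]) := by push_cast; ring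
  rw [h, ← zint_smul]
  exact T.smul_mem _ ht

private lemma exists_pow_smul_mem (T : Submodule ℤ_[p] V)
    (hspan : Submodule.span ℚ_[p] (T : Set V) = ⊤) (v : V) :
    ∃ k : ℕ, (p : ℚ_[p]) ^ k • v ∈ T := by
  have hp1 : (1:ℝ) < p := by exact_mod_cast (Fact.out : p.Prime).one_lt
  have hv : v ∈ Submodule.span ℚ_[p] (T : Set V) := by rw [hspan]; trivial
  induction hv using Submodule.span_induction with
  | mem x hx => exact ⟨0, by simpa using hx⟩
  | zero => exact ⟨0, by simp⟩
  | add x y hx hy ihx ihy =>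
      obtain ⟨kx, hkx⟩ := ihx; obtain ⟨ky, hky⟩ := ihy
      refine ⟨max kx ky, ?_⟩
      rw [smul_add]
      have key : ∀ (z : V) (kz : ℕ), (p:ℚ_[p])^kz • z ∈ T → kz ≤ max kx ky →
          (p:ℚ_[p]) ^ (max kx ky) • z ∈ T := by
        intro z kz hz hle
        have h : (p:ℚ_[p])^(max kx ky - kz) • ((p:ℚ_[p])^kz • z)
            = (p:ℚ_[p]) ^ (max kx ky) • z := by
          rw [smul_smul, ← pow_add, Nat.sub_add_cancel hle]
        rw [← h]; exact pow_p_smul_mem T hz _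
      exact T.add_mem (key x kx hkx (le_max_left _ _)) (key y ky hky (le_max_right _ _))
  | smul a x hx ih =>
      obtain ⟨k, hk⟩ := ih
      obtain ⟨j, hj⟩ : ∃ j : ℕ, ‖a‖ < (p:ℝ) ^ j := pow_unbounded_of_one_lt _ hp1
      have hnorm : ‖(p:ℚ_[p])^j * a‖ ≤ 1 := by
        rw [norm_mul, norm_pow, Padic.norm_p]
        rw [inv_pow]
        rw [inv_mul_le_iff₀ (by positivity), mul_one]
        exact hj.le
      refine ⟨j + k, ?_⟩
      let c : ℤ_[p] := ⟨(p:ℚ_[p])^j * a, hnorm⟩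
      have h : (p:ℚ_[p])^(j+k) • (a • x) = c • ((p:ℚ_[p])^k • x) := by
        rw [zint_smul, smul_smul, smul_smul]
        show ((p:ℚ_[p])^(j+k) * a) • x = ((p:ℚ_[p])^j * a * (p:ℚ_[p])^k) • x
        congr 1
        rw [pow_add]; ring
      rw [h]
      exact T.smul_mem _ hk

end helpers
section core

variable {p : ℕ} [Fact p.Prime]

private lemma core {n : ℕ}
    (T : Submodule ℤ_[p] (Fin n → ℚ_[p])) (hFG : T.FG)
    (hspan : Submodule.span ℚ_[p] (T : Set (Fin n → ℚ_[p])) = ⊤)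
    {ι : Type*} (σ : ι → ((Fin n → ℚ_[p]) →ₗ[ℚ_[p]] (Fin n → ℚ_[p])))
    (hstab : ∀ i, ∀ x ∈ T, σ i x ∈ T)
    (hfix : ∀ v, (∀ i, σ i v = v) → v = 0) :
    ∃ k : ℕ, ∀ v, (∀ i, σ i v - v ∈ T) → (p:ℚ_[p])^k • v ∈ T := by
  classical
  have hp1 : (1:ℝ) < p := by exact_mod_cast (Fact.out : p.Prime).one_lt
  have hp0 : (p:ℚ_[p]) ≠ 0 := by
    exact_mod_cast (Fact.out : p.Prime).ne_zero
  have hcoe : Continuous ((↑) : ℤ_[p] → ℚ_[p]) := by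
    have : Isometry ((↑) : ℤ_[p] → ℚ_[p]) :=
      Isometry.of_dist_eq (fun x y => rfl)
    exact this.continuous
  -- T is compact
  obtain ⟨s, hs⟩ := hFG
  have hcompact : IsCompact (T : Set (Fin n → ℚ_[p])) := by
    have himage : (T : Set (Fin n → ℚ_[p]))
        = (fun c : s → ℤ_[p] => ∑ x : s, (c x : ℚ_[p]) • (x : Fin n → ℚ_[p])) '' Set.univ := by
      ext v
      constructor
      · intro hv
        rw [SetLike.mem_coe, ← hs, mem_span_finset] at hv
        obtain ⟨f, -, hf⟩ := hv
        refine ⟨fun x => f x, Set.mem_univ _, ?_⟩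
        rw [← hf, ← Finset.sum_coe_sort s (fun i => f i • i)]
        exact Finset.sum_congr rfl (fun x _ => (zint_smul _ _).symm)
      · rintro ⟨c, -, rfl⟩
        refine sum_mem (fun x _ => ?_)
        rw [← zint_smul]
        exact T.smul_mem _ (by rw [← hs]; exact Submodule.subset_span x.2)
    rw [himage]
    refine IsCompact.image isCompact_univ ?_
    refine continuous_finset_sum _ (fun x _ => ?_)
    exact (hcoe.comp (continuous_apply x)).smul continuous_const
  have hclosed : IsClosed (T : Set (Fin n → ℚ_[p])) := hcompact.isClosed
  obtain ⟨C, hC⟩ := isBounded_iff_forall_norm_le.1 hcompact.isBounded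
  -- T contains a ball around 0
  obtain ⟨δ, hδpos, hδ⟩ : ∃ δ : ℝ, 0 < δ ∧ ∀ y : Fin n → ℚ_[p], ‖y‖ < δ → y ∈ T := by
    have hUnion : ⋃ k : ℕ, ((fun x : Fin n → ℚ_[p] => (p:ℚ_[p])^k • x) ⁻¹' T) = Set.univ := by
      ext v
      simp only [Set.mem_iUnion, Set.mem_preimage, Set.mem_univ, iff_true, SetLike.mem_coe]
      exact exists_pow_smul_mem T hspan v
    obtain ⟨k0, x, hx⟩ := nonempty_interior_of_iUnion_of_closed
      (fun k => hclosed.preimage (continuous_const_smul _)) hUnion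
    rw [mem_interior_iff_mem_nhds, Metric.mem_nhds_iff] at hx
    obtain ⟨ε, hεpos, hball⟩ := hx
    have hx0 : (p:ℚ_[p])^k0 • x ∈ T := by
      have := hball (Metric.mem_ball_self hεpos)
      exact this
    have step : ∀ y : Fin n → ℚ_[p], ‖y‖ < ε → (p:ℚ_[p])^k0 • y ∈ T := by
      intro y hy
      have hmem : x + y ∈ Metric.ball x ε := by
        rw [Metric.mem_ball, dist_eq_norm]
        simpa using hy
      have h2 : (p:ℚ_[p])^k0 • (x + y) ∈ T := hball hmem
      have : (p:ℚ_[p])^k0 • y = (p:ℚ_[p])^k0 • (x + y) - (p:ℚ_[p])^k0 • x := by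
        rw [smul_add]; abel
      rw [this]
      exact T.sub_mem h2 hx0
    refine ⟨ε * ((p:ℝ)⁻¹)^k0, by positivity, ?_⟩
    intro z hz
    have hzy : z = (p:ℚ_[p])^k0 • (((p:ℚ_[p])^k0)⁻¹ • z) := by
      rw [smul_inv_smul₀ (pow_ne_zero _ hp0)]
    rw [hzy]
    refine step _ ?_
    rw [norm_smul, norm_inv, norm_pow, Padic.norm_p, inv_pow, inv_inv]
    calc (p:ℝ)^k0 * ‖z‖ < (p:ℝ)^k0 * (ε * ((p:ℝ)⁻¹)^k0) := by
          apply mul_lt_mul_of_pos_left hz (by positivity)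
      _ = ε := by
          rw [inv_pow]
          field_simp
  have hTopen : IsOpen (T : Set (Fin n → ℚ_[p])) := by
    rw [Metric.isOpen_iff]
    intro t ht
    refine ⟨δ, hδpos, fun y hy => ?_⟩
    have : y - t ∈ T := hδ _ (by rw [← dist_eq_norm]; exact hy)
    simpa using T.add_mem this ht
  -- main contradiction
  by_contra hcon
  push_neg at hcon
  choose v hv hv' using hcon
  have hmex : ∀ k, ∃ mk : ℕ, k < mk ∧ ((p:ℚ_[p])^mk • v k ∈ T) ∧
      (p:ℚ_[p])^(mk - 1) • v k ∉ T := by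
    intro k
    have hm : ∃ j, (p:ℚ_[p])^j • v k ∈ T := exists_pow_smul_mem T hspan (v k)
    refine ⟨Nat.find hm, ?_, Nat.find_spec hm, ?_⟩
    · by_contra h
      push_neg at h
      apply hv' k
      have heq : (p:ℚ_[p])^(k - Nat.find hm) • ((p:ℚ_[p])^(Nat.find hm) • v k)
          = (p:ℚ_[p])^k • v k := by
        rw [smul_smul, ← pow_add, Nat.sub_add_cancel h]
      rw [← heq]
      exact pow_p_smul_mem T (Nat.find_spec hm) _
    · intro hmem
      have hfind : 0 < Nat.find hm := by
        rcases (Nat.eq_zero_or_pos (Nat.find hm)).symm with h | h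
        · exact h
        · exfalso; apply hv' k
          have := Nat.find_spec hm
          rw [h, pow_zero, one_smul] at this
          exact pow_p_smul_mem T this k
      exact Nat.find_min hm (by omega) hmem
  choose m hmgt hmT hmnot using hmex
  set w : ℕ → (Fin n → ℚ_[p]) := fun k => (p:ℚ_[p])^(m k - 1) • v k with hw_def
  have hwT : ∀ k, w k ∉ T := fun k => hmnot k
  have hdisc : ∀ k i, ∃ t ∈ T, σ i (w k) - w k = (p:ℚ_[p])^k • t := by
    intro k i
    refine ⟨(p:ℚ_[p])^(m k - 1 - k) • (σ i (v k) - v k), ?_, ?_⟩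
    · exact pow_p_smul_mem T (hv k i) _
    · rw [hw_def]
      simp only [map_smul]
      rw [← smul_sub, smul_smul, ← pow_add]
      congr 2
      have := hmgt k
      omega
  have hwU : ∀ k, w k ∈ (fun x : Fin n → ℚ_[p] => (p:ℚ_[p])⁻¹ • x) '' (T : Set (Fin n → ℚ_[p])) := by
    intro k
    refine ⟨(p:ℚ_[p]) • w k, ?_, ?_⟩
    swap
    · show (p:ℚ_[p])⁻¹ • ((p:ℚ_[p]) • w k) = w k
      rw [inv_smul_smul₀ hp0]
    have heq : (p:ℚ_[p]) • w k = (p:ℚ_[p])^(m k) • v k := by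
      rw [hw_def, smul_smul, ← pow_succ']
      congr 2
      have := hmgt k
      omega
    rw [heq]
    exact hmT k
  have hUcomp : IsCompact ((fun x : Fin n → ℚ_[p] => (p:ℚ_[p])⁻¹ • x) '' (T : Set (Fin n → ℚ_[p]))) :=
    hcompact.image (continuous_const_smul _)
  obtain ⟨winf, hwinfU, φ, hφ, hlim⟩ := hUcomp.tendsto_subseq hwU
  have hwinfT : winf ∉ T := by
    have hclosedc : IsClosed ((T : Set (Fin n → ℚ_[p]))ᶜ) := hTopen.isClosed_compl
    exact hclosedc.mem_of_tendsto hlim (Filter.Eventually.of_forall (fun j => hwT (φ j)))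
  have hfixed : ∀ i, σ i winf = winf := by
    intro i
    have hcontσ : Continuous (σ i) := LinearMap.continuous_of_finiteDimensional _
    have h1 : Filter.Tendsto (fun j => σ i (w (φ j)) - w (φ j)) Filter.atTop
        (nhds (σ i winf - winf)) :=
      ((hcontσ.tendsto winf).comp hlim).sub hlim
    have h2 : Filter.Tendsto (fun j => σ i (w (φ j)) - w (φ j)) Filter.atTop (nhds 0) := by
      refine squeeze_zero_norm (a := fun j => ((p:ℝ)⁻¹)^(φ j) * C) ?_ ?_
      · intro j
        obtain ⟨t, ht, heq⟩ := hdisc (φ j) i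
        rw [heq, norm_smul, norm_pow, Padic.norm_p]
        exact mul_le_mul_of_nonneg_left (hC t ht) (by positivity)
      · have h3 : Filter.Tendsto (fun j : ℕ => ((p:ℝ)⁻¹)^j) Filter.atTop (nhds 0) :=
          tendsto_pow_atTop_nhds_zero_of_lt_one (by positivity)
            (by rw [inv_lt_one_iff₀]; right; exact hp1)
        have := (h3.comp hφ.tendsto_atTop).mul_const C
        simpa using this
    have := tendsto_nhds_unique h1 h2
    have := sub_eq_zero.mp this
    exact this
  exact hwinfT (absurd (hfix winf hfixed) (by
    intro h
    exact hwinfT (h ▸ T.zero_mem)) )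

end core

/-- If `T` is a full `ℤ_p`-lattice in a finite-dimensional `ℚ_p`-vector space `V`,
stable under a group action `ρ` on `V` with no nonzero fixed vectors, then the image
in `V/T` of the set of `v` with `ρ(g)v − v ∈ T` for all `g` is finite. -/
theorem finiteness_of_fixed_points_in_quotient
    {p : ℕ} [Fact p.Prime] {V : Type*} [AddCommGroup V]
    [Module ℚ_[p] V] [FiniteDimensional ℚ_[p] V]
    [Module ℤ_[p] V] [IsScalarTower ℤ_[p] ℚ_[p] V]
    (T : Submodule ℤ_[p] V) (hFG : T.FG)
    (hspan : Submodule.span ℚ_[p] (T : Set V) = ⊤)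
    {G : Type*} [Group G] (ρ : G →* (V ≃ₗ[ℚ_[p]] V))
    (hstab : ∀ g : G, ∀ x ∈ T, ρ g x ∈ T)
    (hfix : ∀ v : V, (∀ g : G, ρ g v = v) → v = 0) :
    (((Submodule.Quotient.mk : V → V ⧸ T)) ''
      {v : V | ∀ g : G, ρ g v - v ∈ T}).Finite := by
  classical
  -- transport to `Fin n → ℚ_[p]`
  set E := (Module.finBasis ℚ_[p] V).equivFun with hE
  set Eℤ := LinearEquiv.restrictScalars ℤ_[p] E with hEZ
  have hEZE : ∀ x : V, Eℤ x = E x := fun _ => rfl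
  set T' := T.map Eℤ.toLinearMap with hT'
  have hFG' : T'.FG := hFG.map _
  have hT'coe : (T' : Set (Fin (Module.finrank ℚ_[p] V) → ℚ_[p])) = E '' (T : Set V) := by
    rw [hT', Submodule.map_coe]
    rfl
  have hspan' : Submodule.span ℚ_[p] (T' : Set (Fin (Module.finrank ℚ_[p] V) → ℚ_[p])) = ⊤ := by
    rw [hT'coe, show (⇑E : V → _) = ⇑E.toLinearMap from rfl, Submodule.span_image, hspan, Submodule.map_top]
    exact LinearEquiv.range E
  set σ : G → ((Fin (Module.finrank ℚ_[p] V) → ℚ_[p]) →ₗ[ℚ_[p]] (Fin (Module.finrank ℚ_[p] V) → ℚ_[p]))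
    := fun g => E.toLinearMap ∘ₗ (ρ g).toLinearMap ∘ₗ E.symm.toLinearMap with hσ
  have hσap : ∀ g x, σ g x = E (ρ g (E.symm x)) := fun g x => rfl
  have hfix' : ∀ w, (∀ g, σ g w = w) → w = 0 := by
    intro w hw
    have : E.symm w = 0 := by
      apply hfix
      intro g
      have := hw g
      rw [hσap] at this
      have := congrArg E.symm this
      rwa [LinearEquiv.symm_apply_apply] at this
    have := congrArg E this
    rwa [LinearEquiv.apply_symm_apply, map_zero] at this
  obtain ⟨k, hk⟩ := core T' hFG' hspan' σ
    (by
      intro g x hx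
      obtain ⟨t, ht, rfl⟩ := Submodule.mem_map.1 hx
      rw [hσap]
      show E ((ρ g) (E.symm (E t))) ∈ T'
      rw [LinearEquiv.symm_apply_apply]
      exact Submodule.mem_map_of_mem (hstab g t ht))
    hfix'
  have hkey : ∀ v : V, (∀ g : G, ρ g v - v ∈ T) → (p:ℚ_[p])^k • v ∈ T := by
    intro v hv
    have h1 : ∀ g, σ g (E v) - E v ∈ T' := by
      intro g
      have heq : σ g (E v) - E v = Eℤ (ρ g v - v) := by
        rw [hσap, LinearEquiv.symm_apply_apply, hEZE, map_sub]
      rw [heq]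
      exact Submodule.mem_map_of_mem (hv g)
    have h2 := hk (E v) h1
    have heq : (p:ℚ_[p])^k • E v = Eℤ ((p:ℚ_[p])^k • v) := by
      rw [hEZE, map_smul]
    rw [heq, Submodule.mem_map_equiv] at h2
    rwa [LinearEquiv.symm_apply_apply] at h2
  -- counting
  have hp0 : (p:ℚ_[p]) ≠ 0 := by exact_mod_cast (Fact.out : p.Prime).ne_zero
  have hq0 : ((p:ℚ_[p])^k) ≠ 0 := pow_ne_zero _ hp0
  obtain ⟨s, hs⟩ := hFG
  set F : (s → ℕ) → V ⧸ T := fun r =>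
    Submodule.Quotient.mk (∑ x : s, ((r x : ℤ_[p]) : ℚ_[p]) • ((p:ℚ_[p])^k)⁻¹ • (x : V)) with hF
  have hfin : (Set.pi Set.univ (fun _ : s => Set.Iio (p^k))).Finite :=
    Set.Finite.pi (fun _ => Set.finite_Iio _)
  refine Set.Finite.subset (hfin.image F) ?_
  rintro q ⟨v, hv, rfl⟩
  have hvT : (p:ℚ_[p])^k • v ∈ T := hkey v hv
  rw [← hs, mem_span_finset] at hvT
  obtain ⟨f, -, hf⟩ := hvT
  set r : s → ℕ := fun x => (f x).appr k with hr
  refine ⟨r, ?_, ?_⟩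
  · intro x _
    exact PadicInt.appr_lt _ _
  · rw [hF]
    symm
    rw [Submodule.Quotient.eq]
    have hexp : ∀ x : s, ∃ d : ℤ_[p], f (x:V) - ((r x : ℤ_[p])) = (p:ℤ_[p])^k * d := by
      intro x
      have := PadicInt.appr_spec k (f (x:V))
      rw [Ideal.mem_span_singleton] at this
      obtain ⟨d, hd⟩ := this
      exact ⟨d, by push_cast at hd ⊢; rw [hd]⟩
    choose d hd using hexp
    have hsum : v - (∑ x : s, ((r x : ℤ_[p]) : ℚ_[p]) • ((p:ℚ_[p])^k)⁻¹ • (x : V))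
        = ∑ x : s, (d x) • (x : V) := by
      have hv' : v = ∑ x : s, ((f (x:V) : ℚ_[p])) • ((p:ℚ_[p])^k)⁻¹ • (x : V) := by
        have h1 : v = ((p:ℚ_[p])^k)⁻¹ • ((p:ℚ_[p])^k • v) := by
          rw [inv_smul_smul₀ hq0]
        rw [h1, ← hf, ← Finset.sum_coe_sort s (fun i => f i • i), Finset.smul_sum]
        refine Finset.sum_congr rfl (fun x _ => ?_)
        rw [zint_smul, smul_smul, smul_smul, mul_comm]
      rw [hv', ← Finset.sum_sub_distrib]
      refine Finset.sum_congr rfl (fun x _ => ?_)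
      rw [← sub_smul, zint_smul (d x), smul_smul]
      congr 1
      have hdx := hd x
      have hc : ((f (x:V) : ℚ_[p])) - ((r x : ℤ_[p]) : ℚ_[p]) = (p:ℚ_[p])^k * (d x : ℚ_[p]) := by
        exact_mod_cast congrArg (fun z : ℤ_[p] => (z : ℚ_[p])) hdx
      rw [hc, mul_comm, inv_mul_cancel_left₀ hq0]
    rw [hsum]
    refine sum_mem (fun x _ => ?_)
    exact T.smul_mem _ (by rw [← hs]; exact Submodule.subset_span x.2)
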